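/- Let C be a nonempty bounded closed convex subset of a real Hilbert space H and let T : C → C be a mapping satisfying 9‖Tx − Ty‖² ≤ ‖x − y‖² + ‖Tx − y‖² + ‖Ty − x‖² for all x, y ∈ C. Then T has a unique fixed point in C. -/

import Mathlib

/-- A self-mapping of a nonempty bounded closed convex subset of a real
Hilbert space satisfying `9‖Tx - Ty‖² ≤ ‖x - y‖² + ‖Tx - y‖² + ‖Ty - x‖²` has a
unique fixed point. -/
theorem quadratic_c_mapping_unique_fixed_point
    {H : Type*} [NormedAddCommGroup H] [InnerProductSpace ℝ H] [CompleteSpace H]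
    (C : Set H) (hne : C.Nonempty) (hbdd : Bornology.IsBounded C)
    (hclosed : IsClosed C) (hconv : Convex ℝ C)
    (T : H → H) (hT : Set.MapsTo T C C)
    (hineq : ∀ x ∈ C, ∀ y ∈ C,
      9 * ‖T x - T y‖ ^ 2 ≤ ‖x - y‖ ^ 2 + ‖T x - y‖ ^ 2 + ‖T y - x‖ ^ 2) :
    ∃! z, z ∈ C ∧ T z = z := by
  obtain ⟨x0, hx0⟩ := hne
  set x : ℕ → H := fun n => T^[n] x0 with hxdef
  have hxsucc : ∀ n, x (n + 1) = T (x n) := by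
    intro n; simp [hxdef, Function.iterate_succ_apply']
  have hxC : ∀ n, x n ∈ C := by
    intro n
    induction n with
    | zero => simpa [hxdef] using hx0
    | succ n ih => rw [hxsucc]; exact hT ih
  -- key contraction on consecutive steps
  have key : ∀ u ∈ C, ‖T u - T (T u)‖ ^ 2 ≤ (3 / 7) * ‖u - T u‖ ^ 2 := by
    intro u hu
    have h1 := hineq u hu (T u) (hT hu)
    have h2 : ‖T (T u) - u‖ ≤ ‖T (T u) - T u‖ + ‖T u - u‖ := by
      have := dist_triangle (T (T u)) (T u) u
      simpa [dist_eq_norm] using this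
    have h3 : ‖T (T u) - T u‖ = ‖T u - T (T u)‖ := norm_sub_rev _ _
    have h4 : ‖T u - u‖ = ‖u - T u‖ := norm_sub_rev _ _
    have hnn1 : (0:ℝ) ≤ ‖T (T u) - u‖ := norm_nonneg _
    have hnn2 : (0:ℝ) ≤ ‖u - T u‖ := norm_nonneg _
    have hnn3 : (0:ℝ) ≤ ‖T u - T (T u)‖ := norm_nonneg _
    rw [h3, h4] at h2
    have h0 : ‖T u - T u‖ = 0 := by simp
    rw [h0] at h1
    have h5 : ‖T (T u) - u‖ ^ 2 ≤ (‖T u - T (T u)‖ + ‖u - T u‖) ^ 2 :=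
      pow_le_pow_left₀ hnn1 h2 2
    nlinarith [sq_nonneg (‖T u - T (T u)‖ - ‖u - T u‖)]
  set r : ℝ := Real.sqrt (3 / 7) with hrdef
  have hr0 : 0 ≤ r := Real.sqrt_nonneg _
  have hr1 : r < 1 := by
    rw [hrdef, show (1:ℝ) = Real.sqrt 1 by simp]
    exact Real.sqrt_lt_sqrt (by norm_num) (by norm_num)
  set a : ℕ → ℝ := fun n => ‖x n - x (n + 1)‖ with hadef
  have ha0 : ∀ n, 0 ≤ a n := fun n => norm_nonneg _
  have hstep : ∀ n, a (n + 1) ≤ r * a n := by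
    intro n
    have hk := key (x n) (hxC n)
    have : a (n + 1) ^ 2 ≤ (r * a n) ^ 2 := by
      have : (r * a n) ^ 2 = (3 / 7) * a n ^ 2 := by
        rw [mul_pow, hrdef, Real.sq_sqrt (by norm_num : (3:ℝ)/7 ≥ 0)]
      rw [this]
      simpa [hadef, hxsucc] using hk
    have h1 : a (n + 1) = Real.sqrt (a (n + 1) ^ 2) := by
      rw [Real.sqrt_sq (ha0 _)]
    have h2 : r * a n = Real.sqrt ((r * a n) ^ 2) := by
      rw [Real.sqrt_sq (mul_nonneg hr0 (ha0 _))]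
    rw [h1, h2]
    exact Real.sqrt_le_sqrt this
  have hgeo : ∀ n, a n ≤ a 0 * r ^ n := by
    intro n
    induction n with
    | zero => simp
    | succ n ih =>
      calc a (n + 1) ≤ r * a n := hstep n
        _ ≤ r * (a 0 * r ^ n) := by
            exact mul_le_mul_of_nonneg_left ih hr0
        _ = a 0 * r ^ (n + 1) := by ring
  have hcauchy : CauchySeq x := by
    apply cauchySeq_of_le_geometric r (a 0) hr1
    intro n
    rw [dist_eq_norm]
    exact hgeo n
  obtain ⟨z, hz⟩ := cauchySeq_tendsto_of_complete hcauchy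
  have hzC : z ∈ C := hclosed.mem_of_tendsto hz (Filter.Eventually.of_forall hxC)
  -- e n = ‖x n - z‖ → 0
  set e : ℕ → ℝ := fun n => ‖x n - z‖ with hedef
  have he0 : Filter.Tendsto e Filter.atTop (nhds 0) := by
    have := (hz.sub (tendsto_const_nhds (x := z))).norm
    simpa [hedef] using this
  have heNN : ∀ n, 0 ≤ e n := fun n => norm_nonneg _
  -- bound on distances within C
  obtain ⟨M, hM⟩ := Metric.isBounded_iff.mp hbdd
  set D : ℝ := ‖T z - z‖ with hDdef
  have hDnn : 0 ≤ D := norm_nonneg _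
  -- main estimate
  have hmain : ∀ n, 9 * D ^ 2 ≤
      e n ^ 2 + (D + e n) ^ 2 + e (n + 1) ^ 2 + 18 * M * e (n + 1) + 9 * e (n + 1) ^ 2 := by
    intro n
    have hTxn : T (x n) = x (n + 1) := (hxsucc n).symm
    have h1 := hineq z hzC (x n) (hxC n)
    -- 9 ‖Tz - x(n+1)‖² ≤ ‖z - x n‖² + ‖Tz - x n‖² + ‖x(n+1) - z‖²
    have hA : ‖z - x n‖ = e n := norm_sub_rev z (x n)
    have hB : ‖T z - x n‖ ≤ D + e n := by
      have := dist_triangle (T z) z (x n)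
      simpa [dist_eq_norm, hDdef, hedef, norm_sub_rev (x n) z] using this
    have hC1 : D ≤ ‖T z - x (n + 1)‖ + e (n + 1) := by
      have := dist_triangle (T z) (x (n + 1)) z
      simpa [dist_eq_norm, hDdef, hedef] using this
    have hMbd : ‖T z - x (n + 1)‖ ≤ M := by
      have := hM (hT hzC) (hxC (n + 1))
      simpa [dist_eq_norm] using this
    have hMnn : 0 ≤ ‖T z - x (n + 1)‖ := norm_nonneg _
    have h1' : 9 * ‖T z - x (n+1)‖ ^ 2 ≤ ‖z - x n‖ ^ 2 + ‖T z - x n‖ ^ 2 + ‖x (n+1) - z‖ ^ 2 := by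
      simpa [hTxn] using h1
    rw [hA] at h1'
    have hE1 : ‖x (n + 1) - z‖ = e (n + 1) := rfl
    rw [hE1] at h1'
    nlinarith [mul_self_le_mul_self hDnn hC1,
      mul_self_le_mul_self (norm_nonneg (T z - x n)) hB,
      mul_le_mul_of_nonneg_right hMbd (heNN (n+1)),
      heNN n, heNN (n+1), hDnn, hMnn]
  -- take the limit: RHS → D²
  have hlim : Filter.Tendsto (fun n =>
      e n ^ 2 + (D + e n) ^ 2 + e (n + 1) ^ 2 + 18 * M * e (n + 1) + 9 * e (n + 1) ^ 2)
      Filter.atTop (nhds (D ^ 2)) := by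
    have he0' : Filter.Tendsto (fun n => e (n + 1)) Filter.atTop (nhds 0) := by
      have := he0.comp (Filter.tendsto_add_atTop_nat 1)
      exact this
    have h2 := ((((he0.pow 2).add
      (((tendsto_const_nhds (x := D)).add he0).pow 2)).add
      (he0'.pow 2)).add ((tendsto_const_nhds (x := 18 * M)).mul he0')).add
      ((tendsto_const_nhds (x := (9:ℝ))).mul (he0'.pow 2))
    have heq : (0:ℝ) ^ 2 + (D + 0) ^ 2 + 0 ^ 2 + 18 * M * 0 + 9 * 0 ^ 2 = D ^ 2 := by ring
    rw [heq] at h2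
    exact h2
  have h9D : 9 * D ^ 2 ≤ D ^ 2 := ge_of_tendsto hlim (Filter.Eventually.of_forall hmain)
  have hD0 : D = 0 := by nlinarith [sq_nonneg D]
  have hfix : T z = z := by
    have : ‖T z - z‖ = 0 := hD0
    rwa [norm_sub_eq_zero_iff] at this
  refine ⟨z, ⟨hzC, hfix⟩, ?_⟩
  rintro w ⟨hwC, hwfix⟩
  have h := hineq w hwC z hzC
  rw [hwfix, hfix] at h
  have : ‖w - z‖ = 0 := by
    have hnn : 0 ≤ ‖w - z‖ := norm_nonneg _
    have hrev : ‖z - w‖ = ‖w - z‖ := norm_sub_rev _ _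
    nlinarith [h, hrev]
  rwa [norm_sub_eq_zero_iff] at this
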